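/- If x ∈ ℝ^N has a unique coordinate j of maximal absolute value (i.e., |xⱼ| > |xᵢ| for all i ≠ j) and all coordinates are nonzero, then as p → ∞ the gradient of LSEAp(·; p) at x converges to the vector sgn(xⱼ)·eⱼ, which is the gradient of the ℓ_∞ norm at x. -/

import Mathlib

open Filter

theorem lseap_gradient_tendsto_linf_grad (N : ℕ) (x : Fin N → ℝ) (j : Fin N)
    (hx : ∀ i, x i ≠ 0) (hj : ∀ i, i ≠ j → |x i| < |x j|) :
    Tendsto
      (fun p : ℝ => fun k : Fin N =>
        Real.sign (x k) * Real.exp (p * (|x k| - ‖x‖)) /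
          ∑ i, Real.exp (p * (|x i| - ‖x‖)))
      atTop (nhds (Pi.single j (Real.sign (x j)))) ∧
    HasFDerivAt (fun y : Fin N → ℝ => ‖y‖)
      (Real.sign (x j) • (ContinuousLinearMap.proj j : (Fin N → ℝ) →L[ℝ] ℝ)) x := by
  have hnorm : ‖x‖ = |x j| := by
    refine le_antisymm ((pi_norm_le_iff_of_nonneg (abs_nonneg _)).2 fun i => ?_) ?_
    · rw [Real.norm_eq_abs]
      rcases eq_or_ne i j with rfl | h
      · exact le_rfl
      · exact (hj i h).le
    · simpa [Real.norm_eq_abs] using norm_le_pi_norm x j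
  have hterm : ∀ i, Tendsto (fun p : ℝ => Real.exp (p * (|x i| - ‖x‖))) atTop
      (nhds (if i = j then 1 else 0)) := by
    intro i
    rcases eq_or_ne i j with rfl | h
    · simp [hnorm, sub_self, mul_zero, Real.exp_zero]
    · rw [if_neg h, hnorm]
      have hc : |x i| - |x j| < 0 := sub_neg.2 (hj i h)
      exact Real.tendsto_exp_atBot.comp (tendsto_id.atTop_mul_const_of_neg hc)
  have hden : Tendsto (fun p : ℝ => ∑ i, Real.exp (p * (|x i| - ‖x‖))) atTop (nhds 1) := by
    have := tendsto_finset_sum Finset.univ (fun i _ => hterm i)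
    simpa [Finset.sum_ite_eq'] using this
  constructor
  · refine tendsto_pi_nhds.2 fun k => ?_
    have h := (Tendsto.const_mul (Real.sign (x k)) (hterm k)).div hden one_ne_zero
    rcases eq_or_ne k j with rfl | hk
    · simpa [Pi.div_def] using h
    · simpa [hk, Pi.single_eq_of_ne hk, Pi.div_def] using h
  · have hx0 : x j ≠ 0 := hx j
    have hsign : (SignType.sign (x j) : ℝ) = Real.sign (x j) := by
      rcases hx0.lt_or_gt with h | h
      · simp [Real.sign_of_neg h, sign_neg h]
      · simp [Real.sign_of_pos h, sign_pos h]
    have h1 : HasFDerivAt (fun y : Fin N → ℝ => |y j|)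
        (Real.sign (x j) • (ContinuousLinearMap.proj j : (Fin N → ℝ) →L[ℝ] ℝ)) x := by
      have := (hasDerivAt_abs hx0).comp_hasFDerivAt x
        ((ContinuousLinearMap.proj j : (Fin N → ℝ) →L[ℝ] ℝ).hasFDerivAt (x := x))
      rw [hsign] at this
      exact this
    refine h1.congr_of_eventuallyEq ?_
    have hev : ∀ᶠ y in nhds x, ∀ i, |y i| ≤ |y j| := by
      rw [eventually_all]
      intro i
      rcases eq_or_ne i j with rfl | h
      · exact Filter.Eventually.of_forall fun _ => le_rfl
      · have hc1 : ContinuousAt (fun y : Fin N → ℝ => |y i|) x :=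
          ((continuous_apply i).abs).continuousAt
        have hc2 : ContinuousAt (fun y : Fin N → ℝ => |y j|) x :=
          ((continuous_apply j).abs).continuousAt
        exact (hc1.eventually_lt hc2 (hj i h)).mono fun y hy => hy.le
    refine hev.mono fun y hy => ?_
    refine le_antisymm ((pi_norm_le_iff_of_nonneg (abs_nonneg _)).2 fun i => ?_) ?_
    · rw [Real.norm_eq_abs]; exact hy i
    · simpa [Real.norm_eq_abs] using norm_le_pi_norm y j
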